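/- The quadratic and quartic Taylor coefficients (at m=0) of the zero-field free energy F(m) = (K/2)m² - J - (1/β)log[cosh(βKm) + sqrt(sinh²(βKm) + e^{-4βJ})] vanish simultaneously if and only if βJ = -log(3)/4 and βK = √3. -/
import Mathlib


/-- The quadratic and quartic coefficients of the zero-field free energy vanish
simultaneously iff `βJ = -log 3 / 4` and `βK = √3` (tricritical point). -/
theorem stmt12 (β J K : ℝ) (hβ : 0 < β) (hK : K ≠ 0) :
    (K / 2 * (1 - β * K * Real.exp (2 * β * J)) = 0 ∧
      β ^ 3 * K ^ 4 * (3 * Real.exp (4 * β * J) - 1) / (24 * Real.exp (-(2 * β * J))) = 0)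
    ↔ (β * J = -Real.log 3 / 4 ∧ β * K = Real.sqrt 3) := by
  have hE2 : (0:ℝ) < Real.exp (2 * β * J) := Real.exp_pos _
  have hE4 : Real.exp (4 * β * J) = Real.exp (2 * β * J) ^ 2 := by
    rw [← Real.exp_nat_mul]; ring_nf
  constructor
  · rintro ⟨h1, h2⟩
    have hbk : β * K * Real.exp (2 * β * J) = 1 := by
      have : 1 - β * K * Real.exp (2 * β * J) = 0 := by
        rcases mul_eq_zero.mp h1 with h | h
        · exact absurd h (by simpa using hK)
        · exact h
      linarith
    have hden : (24 * Real.exp (-(2 * β * J))) ≠ 0 := by positivity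
    have hnum : β ^ 3 * K ^ 4 * (3 * Real.exp (4 * β * J) - 1) = 0 :=
      (div_eq_zero_iff.mp h2).resolve_right hden
    have h3 : 3 * Real.exp (4 * β * J) - 1 = 0 := by
      rcases mul_eq_zero.mp hnum with h | h
      · rcases mul_eq_zero.mp h with h | h
        · exact absurd h (by positivity)
        · exact absurd h (by positivity)
      · exact h
    have hexp4 : Real.exp (4 * β * J) = 1 / 3 := by linarith
    have hBJ : β * J = -Real.log 3 / 4 := by
      have := Real.log_exp (4 * β * J)
      rw [hexp4] at this
      have hlog : Real.log (1 / 3) = -Real.log 3 := by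
        rw [one_div, Real.log_inv]
      linarith [hlog ▸ this]
    constructor
    · exact hBJ
    · have hbkpos : 0 < β * K := by
        by_contra h
        push_neg at h
        nlinarith
      have hsq : (β * K) ^ 2 = 3 := by
        have : (β * K) ^ 2 * Real.exp (2 * β * J) ^ 2 = 1 := by nlinarith
        rw [← hE4, hexp4] at this
        nlinarith
      rw [← hsq, Real.sqrt_sq hbkpos.le]
  · rintro ⟨hBJ, hBK⟩
    have hexp4 : Real.exp (4 * β * J) = 1 / 3 := by
      have : 4 * β * J = -Real.log 3 := by rw [mul_assoc, hBJ]; ring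
      rw [this, Real.exp_neg, Real.exp_log (by norm_num : (0:ℝ) < 3)]
      norm_num
    have hexp2 : Real.exp (2 * β * J) = Real.sqrt (1 / 3) := by
      have : Real.exp (2 * β * J) ^ 2 = 1 / 3 := by rw [← hE4, hexp4]
      rw [← this, Real.sqrt_sq hE2.le]
    have hbk : β * K * Real.exp (2 * β * J) = 1 := by
      rw [hBK, hexp2, ← Real.sqrt_mul (by norm_num : (0:ℝ) ≤ 3)]
      norm_num
    constructor
    · rw [hbk]; ring
    · rw [hexp4]; ring
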